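/- Let V be a finite-dimensional real vector space and L ⊆ 𝕋_ℂV a lagrangian subspace. With E := pr_{V_ℂ}(L), ε ∈ Λ²E* the unique form with L = L(E,ε), Δ := (E ∩ Ē) ∩ V, D := (E + Ē) ∩ V, ω_Δ := Im(ε|_{Δ×Δ}), Δ₀ := {X ∈ Δ : ω_Δ(X,·) = 0}, and Ann(D) := {α ∈ V* : α|_D = 0}, there exists a real form B ∈ Λ²V* such that the real part K' of e^B L ∩ conj(e^B L) splits as K' = Δ₀ ⊕ Ann(D) ⊆ V ⊕ V* = 𝕋V. -/

import Mathlib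

open TensorProduct Module

noncomputable section

namespace CDirac


/-- The real generalized tangent space `V ⊕ V*`. -/
abbrev TR (V : Type*) [AddCommGroup V] [Module ℝ V] := V × (V →ₗ[ℝ] ℝ)

variable {V : Type*} [AddCommGroup V] [Module ℝ V]

/-- The canonical pairing `⟨X+ξ, Y+η⟩ = (η X + ξ Y)/2` on `𝕋V`. -/
def pairR (a b : TR V) : ℝ := (b.2 a.1 + a.2 b.1) / 2

lemma pairR_add_left (a a' b : TR V) : pairR (a + a') b = pairR a b + pairR a' b := by
  simp only [pairR, Prod.fst_add, Prod.snd_add, map_add, LinearMap.add_apply]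
  ring

lemma pairR_smul_left (c : ℝ) (a b : TR V) : pairR (c • a) b = c * pairR a b := by
  simp only [pairR, Prod.smul_fst, Prod.smul_snd, map_smul, LinearMap.smul_apply,
    smul_eq_mul]
  ring

/-- Orthogonal complement with respect to the pairing on `𝕋V`. -/
def orthR (L : Submodule ℝ (TR V)) : Submodule ℝ (TR V) where
  carrier := {a | ∀ b ∈ L, pairR a b = 0}
  zero_mem' := fun b _ => by simp [pairR]
  add_mem' := fun {a a'} ha ha' b hb => by
    rw [pairR_add_left, ha b hb, ha' b hb, add_zero]
  smul_mem' := fun c a ha b hb => by rw [pairR_smul_left, ha b hb, mul_zero]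

/-- A real lagrangian subspace: `L = L^⊥`. -/
def IsLagrangianR (L : Submodule ℝ (TR V)) : Prop := L = orthR L

/-- An isotropic subspace of `𝕋V`. -/
def IsIsotropicR (K : Submodule ℝ (TR V)) : Prop := ∀ a ∈ K, ∀ b ∈ K, pairR a b = 0

/-- The quotient `K^⊥/K`. -/
abbrev quotK (K : Submodule ℝ (TR V)) :=
  @HasQuotient.Quotient ↥(orthR K) _ Submodule.hasQuotient (K.comap (orthR K).subtype)

/-- The quotient map `K^⊥ → K^⊥/K`. -/
def mkK (K : Submodule ℝ (TR V)) : ↥(orthR K) →ₗ[ℝ] quotK K :=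
  @Submodule.mkQ ℝ ↥(orthR K) _ (Submodule.addCommGroup _) (Submodule.module _)
    (K.comap (orthR K).subtype)




/-- The complexification `V_ℂ = ℂ ⊗_ℝ V`. -/
abbrev Cx (V : Type*) [AddCommGroup V] [Module ℝ V] := ℂ ⊗[ℝ] V

/-- The complex dual `(V_ℂ)^*`. -/
abbrev DualC (V : Type*) [AddCommGroup V] [Module ℝ V] := Cx V →ₗ[ℂ] ℂ

/-- The complexified generalized tangent space `𝕋_ℂ V = V_ℂ ⊕ (V_ℂ)^*`. -/
abbrev TCx (V : Type*) [AddCommGroup V] [Module ℝ V] := Cx V × DualC V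

/-- The ℂ-bilinear pairing on `𝕋_ℂ V`. -/
def pairC (a b : TCx V) : ℂ := (b.2 a.1 + a.2 b.1) / 2

lemma pairC_add_left (a a' b : TCx V) : pairC (a + a') b = pairC a b + pairC a' b := by
  simp only [pairC, Prod.fst_add, Prod.snd_add, map_add, LinearMap.add_apply]
  ring

lemma pairC_smul_left (c : ℂ) (a b : TCx V) : pairC (c • a) b = c * pairC a b := by
  simp only [pairC, Prod.smul_fst, Prod.smul_snd, map_smul, LinearMap.smul_apply,
    smul_eq_mul]
  ring

/-- Orthogonal complement with respect to the ℂ-bilinear pairing on `𝕋_ℂ V`. -/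
def orthC (L : Submodule ℂ (TCx V)) : Submodule ℂ (TCx V) where
  carrier := {a | ∀ b ∈ L, pairC a b = 0}
  zero_mem' := fun b _ => by simp [pairC]
  add_mem' := fun {a a'} ha ha' b hb => by
    rw [pairC_add_left, ha b hb, ha' b hb, add_zero]
  smul_mem' := fun c a ha b hb => by rw [pairC_smul_left, ha b hb, mul_zero]

/-- A complex lagrangian subspace: `L = L^⊥`. -/
def IsLagrangianC (L : Submodule ℂ (TCx V)) : Prop := L = orthC L

private lemma conjCxAux_smul (z : ℂ) (x : Cx V) :
    TensorProduct.map Complex.conjAe.toLinearMap LinearMap.id (z • x) =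
      starRingEnd ℂ z • TensorProduct.map Complex.conjAe.toLinearMap LinearMap.id x := by
  induction x using TensorProduct.induction_on with
  | zero => simp
  | tmul w v => simp [smul_tmul', smul_eq_mul, Complex.conjAe_coe, map_mul]
  | add x y hx hy => simp only [smul_add, map_add, hx, hy]

/-- Conjugation on `V_ℂ`, as a `conj`-semilinear map. -/
def conjCx : Cx V →ₛₗ[starRingEnd ℂ] Cx V where
  toFun := TensorProduct.map Complex.conjAe.toLinearMap LinearMap.id
  map_add' := map_add _
  map_smul' := conjCxAux_smul

lemma conjCx_smul (z : ℂ) (x : Cx V) :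
    conjCx (z • x) = starRingEnd ℂ z • conjCx x := conjCxAux_smul z x

/-- Conjugation of a complex linear functional. -/
def conjDualFun (ξ : DualC V) : DualC V where
  toFun x := starRingEnd ℂ (ξ (conjCx x))
  map_add' x y := by simp
  map_smul' z x := by
    rw [conjCx_smul, map_smul, smul_eq_mul, map_mul, RingHom.id_apply]
    simp [smul_eq_mul]

/-- Conjugation on `(V_ℂ)^*`, as a `conj`-semilinear map. -/
def conjDual : DualC V →ₛₗ[starRingEnd ℂ] DualC V where
  toFun := conjDualFun
  map_add' ξ η := by ext x; simp [conjDualFun]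
  map_smul' z ξ := by
    ext x
    simp [conjDualFun, smul_eq_mul, map_mul]

/-- Conjugation on `𝕋_ℂ V`, as a `conj`-semilinear map. -/
def conjT : TCx V →ₛₗ[starRingEnd ℂ] TCx V where
  toFun a := (conjCx a.1, conjDual a.2)
  map_add' a b := by simp [Prod.ext_iff]
  map_smul' z a := by
    simp [Prod.ext_iff, Prod.smul_fst, Prod.smul_snd, map_smulₛₗ]

instance : RingHomSurjective (starRingEnd ℂ) :=
  ⟨fun z => ⟨starRingEnd ℂ z, by simp⟩⟩

/-- The conjugate `L̄` of a ℂ-subspace of `𝕋_ℂ V`. -/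
def conjSub (L : Submodule ℂ (TCx V)) : Submodule ℂ (TCx V) := L.map conjT

/-- The conjugate `Ē` of a ℂ-subspace of `V_ℂ`. -/
def conjE (E : Submodule ℂ (Cx V)) : Submodule ℂ (Cx V) := E.map conjCx

/-- The canonical inclusion `V → V_ℂ`, `v ↦ 1 ⊗ v`. -/
def iV : V →ₗ[ℝ] Cx V := TensorProduct.mk ℝ ℂ V 1





/-- ℝ-linear auxiliary version of the ℂ-linear extension of a real functional. -/
def dualExtAux (α : V →ₗ[ℝ] ℝ) : Cx V →ₗ[ℝ] ℂ :=
  TensorProduct.lift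
    (LinearMap.mk₂ ℝ (fun z v => z * (α v : ℂ))
      (fun z w v => by push_cast; ring)
      (fun r z v => by simp only [Complex.real_smul]; ring)
      (fun z v w => by push_cast [map_add]; ring)
      (fun r z v => by simp only [map_smul, smul_eq_mul, Complex.real_smul]; push_cast; ring))

private lemma dualExtAux_smulC (α : V →ₗ[ℝ] ℝ) (z : ℂ) (x : Cx V) :
    dualExtAux α (z • x) = z * dualExtAux α x := by
  induction x using TensorProduct.induction_on with
  | zero => simp
  | tmul w v =>
      simp only [dualExtAux, smul_tmul', lift.tmul, LinearMap.mk₂_apply, smul_eq_mul]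
      ring
  | add x y hx hy => simp only [smul_add, map_add, hx, hy]; ring

/-- The ℂ-linear extension of a real functional `α : V → ℝ` to `V_ℂ`. -/
def dualExtFun (α : V →ₗ[ℝ] ℝ) : DualC V where
  toFun := dualExtAux α
  map_add' := map_add _
  map_smul' z x := by simpa using dualExtAux_smulC α z x

private lemma dualExtFun_tmul (α : V →ₗ[ℝ] ℝ) (z : ℂ) (v : V) :
    dualExtFun α (z ⊗ₜ[ℝ] v) = z * (α v : ℂ) := by
  simp [dualExtFun, dualExtAux]

/-- The ℂ-linear extension map `V^* → (V_ℂ)^*`, as an ℝ-linear map. -/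
def dualExt : (V →ₗ[ℝ] ℝ) →ₗ[ℝ] DualC V where
  toFun := dualExtFun
  map_add' α β := by
    apply LinearMap.ext; intro x
    induction x using TensorProduct.induction_on with
    | zero => simp
    | tmul w v =>
        simp only [dualExtFun_tmul, LinearMap.add_apply]
        push_cast
        ring
    | add x y hx hy =>
        simp only [map_add, LinearMap.add_apply] at *
        rw [hx, hy]
  map_smul' r α := by
    apply LinearMap.ext; intro x
    induction x using TensorProduct.induction_on with
    | zero => simp
    | tmul w v =>
        simp only [dualExtFun_tmul, RingHom.id_apply, LinearMap.smul_apply,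
          LinearMap.smul_apply, smul_eq_mul, Complex.real_smul]
        push_cast
        ring
    | add x y hx hy =>
        simp only [map_add, RingHom.id_apply, LinearMap.smul_apply, smul_eq_mul] at *
        rw [hx, hy]

/-- The canonical inclusion `𝕋V → 𝕋_ℂV`. -/
def iT : TR V →ₗ[ℝ] TCx V where
  toFun a := (iV a.1, dualExt a.2)
  map_add' a b := by simp [Prod.ext_iff]
  map_smul' r a := by simp [Prod.ext_iff]



/-- Auxiliary ℝ-linear version of the ℂ-bilinear extension of a real bilinear form. -/
def bilinExtAux (B : V →ₗ[ℝ] V →ₗ[ℝ] ℝ) : Cx V →ₗ[ℝ] DualC V :=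
  TensorProduct.lift
    (LinearMap.mk₂ ℝ (fun z v => z • dualExt (B v))
      (fun z w v => by simp only [add_smul])
      (fun r z v => by simp only [smul_assoc])
      (fun z v w => by simp only [map_add, smul_add])
      (fun r z v => by simp only [map_smul]; exact smul_comm z r _))

private lemma bilinExtAux_smulC (B : V →ₗ[ℝ] V →ₗ[ℝ] ℝ) (z : ℂ) (x : Cx V) :
    bilinExtAux B (z • x) = z • bilinExtAux B x := by
  induction x using TensorProduct.induction_on with
  | zero => simp
  | tmul w v =>
      simp only [bilinExtAux, smul_tmul', lift.tmul, LinearMap.mk₂_apply, smul_eq_mul,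
        mul_smul]
  | add x y hx hy => simp only [smul_add, map_add, hx, hy]

/-- The ℂ-bilinear extension of a real bilinear form `B : V × V → ℝ` to `V_ℂ`. -/
def bilinExt (B : V →ₗ[ℝ] V →ₗ[ℝ] ℝ) : Cx V →ₗ[ℂ] DualC V where
  toFun := bilinExtAux B
  map_add' := map_add _
  map_smul' z x := by simpa using bilinExtAux_smulC B z x

/-- The `B`-transformation `e^B(X+ξ) = X + ξ + B̃(X,·)` of `𝕋_ℂV`, for a real `B`. -/
def eB (B : V →ₗ[ℝ] V →ₗ[ℝ] ℝ) : TCx V →ₗ[ℂ] TCx V where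
  toFun a := (a.1, a.2 + bilinExt B a.1)
  map_add' a b := by
    simp only [Prod.fst_add, Prod.snd_add, map_add, Prod.mk_add_mk, Prod.mk.injEq]
    exact ⟨trivial, by abel⟩
  map_smul' z a := by
    simp only [Prod.smul_fst, Prod.smul_snd, map_smul, RingHom.id_apply, Prod.smul_mk,
      Prod.mk.injEq, smul_add]

/-- The real `B`-transformation `e^B(X+α) = X + α + B(X,·)` of `𝕋V`. -/
def eBR (B : V →ₗ[ℝ] V →ₗ[ℝ] ℝ) : TR V →ₗ[ℝ] TR V where
  toFun a := (a.1, a.2 + B a.1)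
  map_add' a b := by
    simp only [Prod.fst_add, Prod.snd_add, map_add, Prod.mk_add_mk, Prod.mk.injEq]
    exact ⟨trivial, by abel⟩
  map_smul' r a := by
    simp only [Prod.smul_fst, Prod.smul_snd, map_smul, RingHom.id_apply, Prod.smul_mk,
      Prod.mk.injEq, smul_add]


/-- The range `E = pr_{V_ℂ}(L)` of a subspace of `𝕋_ℂV`. -/
def Esub (L : Submodule ℂ (TCx V)) : Submodule ℂ (Cx V) :=
  L.map (LinearMap.fst ℂ (Cx V) (DualC V))

/-- The real index `r = dim_ℂ (L ∩ L̄)`. -/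
def riL (L : Submodule ℂ (TCx V)) : ℕ := finrank ℂ ↥(L ⊓ conjSub L)

/-- The real part `K = (L ∩ L̄) ∩ 𝕋V`, as a subspace of `𝕋V`. -/
def Ksub (L : Submodule ℂ (TCx V)) : Submodule ℝ (TR V) :=
  ((L ⊓ conjSub L).restrictScalars ℝ).comap iT

/-- The distribution `D = (E + Ē) ∩ V`, as a subspace of `V`. -/
def Dsub (L : Submodule ℂ (TCx V)) : Submodule ℝ V :=
  ((Esub L ⊔ conjE (Esub L)).restrictScalars ℝ).comap iV

/-- The distribution `Δ = (E ∩ Ē) ∩ V`, as a subspace of `V`. -/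
def DeltaSub (L : Submodule ℂ (TCx V)) : Submodule ℝ V :=
  ((Esub L ⊓ conjE (Esub L)).restrictScalars ℝ).comap iV

/-- The order `s = dim V - dim D`. -/
def orderL (L : Submodule ℂ (TCx V)) : ℕ := finrank ℝ V - finrank ℝ ↥(Dsub L)

/-- The (normalized) type `k = dim_ℂ(E + Ē) - dim_ℂ E`. -/
def typeL (L : Submodule ℂ (TCx V)) : ℕ :=
  finrank ℂ ↥(Esub L ⊔ conjE (Esub L)) - finrank ℂ ↥(Esub L)


end CDirac

namespace CDirac

variable {V : Type*} [AddCommGroup V] [Module ℝ V]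

lemma conjCx_tmul (z : ℂ) (v : V) :
    conjCx (z ⊗ₜ[ℝ] v) = (starRingEnd ℂ z) ⊗ₜ[ℝ] v := by
  simp [conjCx, Complex.conjAe_coe]

lemma conjCx_iV (v : V) : conjCx (iV v) = iV v := by
  simp [iV, TensorProduct.mk_apply, conjCx_tmul]

lemma conjCx_conjCx (x : Cx V) : conjCx (conjCx x) = x := by
  induction x using TensorProduct.induction_on with
  | zero => simp
  | tmul z v => simp [conjCx_tmul]
  | add x y hx hy => rw [map_add, map_add, hx, hy]

/-- Real part `V_ℂ → V`. -/
def reP : Cx V →ₗ[ℝ] V :=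
  TensorProduct.lift
    (LinearMap.mk₂ ℝ (fun (z : ℂ) (v : V) => z.re • v)
      (fun z w v => by simp [add_smul])
      (fun r z v => by rw [Complex.smul_re, smul_eq_mul, mul_smul])
      (fun z v w => by simp [smul_add])
      (fun r z v => by rw [smul_comm]))

@[simp] lemma smul_one_tmul (z : ℂ) (v : V) :
    z • ((1:ℂ) ⊗ₜ[ℝ] v) = z ⊗ₜ[ℝ] v := by
  rw [TensorProduct.smul_tmul', smul_eq_mul, mul_one]

@[simp] lemma real_smul_one_tmul (r : ℝ) (v : V) :
    r • ((1:ℂ) ⊗ₜ[ℝ] v) = (r:ℂ) ⊗ₜ[ℝ] v := by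
  rw [TensorProduct.smul_tmul']
  norm_num [Complex.real_smul]

/-- Imaginary part `V_ℂ → V`. -/
def imP : Cx V →ₗ[ℝ] V :=
  TensorProduct.lift
    (LinearMap.mk₂ ℝ (fun (z : ℂ) (v : V) => z.im • v)
      (fun z w v => by simp [add_smul])
      (fun r z v => by rw [Complex.smul_im, smul_eq_mul, mul_smul])
      (fun z v w => by simp [smul_add])
      (fun r z v => by rw [smul_comm]))

@[simp] lemma reP_tmul (z : ℂ) (v : V) : reP (z ⊗ₜ[ℝ] v) = z.re • v := rfl
@[simp] lemma imP_tmul (z : ℂ) (v : V) : imP (z ⊗ₜ[ℝ] v) = z.im • v := rfl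

@[simp] lemma reP_iV (v : V) : reP (iV v) = v := by simp [iV]
@[simp] lemma imP_iV (v : V) : imP (iV v) = 0 := by simp [iV]

lemma cx_decomp (x : Cx V) : x = iV (reP x) + Complex.I • iV (imP x) := by
  induction x using TensorProduct.induction_on with
  | zero => simp
  | tmul z v =>
      simp only [reP_tmul, imP_tmul, iV, TensorProduct.mk_apply]
      rw [TensorProduct.tmul_smul, TensorProduct.tmul_smul, real_smul_one_tmul, real_smul_one_tmul, TensorProduct.smul_tmul',
        ← TensorProduct.add_tmul]
      norm_num
      rw [mul_comm, Complex.re_add_im]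
  | add x y hx hy =>
      rw [map_add, map_add, map_add, map_add, smul_add]
      nth_rewrite 1 [hx, hy]
      abel

lemma conjCx_smul' (z : ℂ) (x : Cx V) :
    conjCx (z • x) = starRingEnd ℂ z • conjCx x := conjCx_smul z x

lemma conjCx_decomp (x : Cx V) : conjCx x = iV (reP x) - Complex.I • iV (imP x) := by
  nth_rewrite 1 [cx_decomp x]
  rw [map_add, conjCx_iV, conjCx_smul', conjCx_iV]
  simp [sub_eq_add_neg]

lemma reP_conjCx (x : Cx V) : reP (conjCx x) = reP x := by
  rw [conjCx_decomp x]
  have : Complex.I • iV (imP x) = (Complex.I * 1) ⊗ₜ[ℝ] imP x := by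
    simp [iV, TensorProduct.mk_apply, ← TensorProduct.smul_tmul']
  simp [this, map_sub]

lemma imP_conjCx (x : Cx V) : imP (conjCx x) = - imP x := by
  rw [conjCx_decomp x]
  have : Complex.I • iV (imP x) = (Complex.I * 1) ⊗ₜ[ℝ] imP x := by
    simp [iV, TensorProduct.mk_apply, ← TensorProduct.smul_tmul']
  simp [this, map_sub]

lemma eq_I_smul_of_anti {x : Cx V} (h : conjCx x = -x) :
    x = Complex.I • iV (imP x) := by
  have h2 : reP x = - reP x := by
    conv_lhs => rw [← reP_conjCx x, h, map_neg]
  have hre : reP x = 0 := by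
    have h3 : (2 : ℝ) • reP x = 0 := by
      rw [two_smul]
      nth_rewrite 1 [h2]
      simp
    simpa using (smul_eq_zero.mp h3).resolve_left (by norm_num)
  calc x = iV (reP x) + Complex.I • iV (imP x) := cx_decomp x
    _ = Complex.I • iV (imP x) := by rw [hre]; simp

lemma eq_iV_of_real {x : Cx V} (h : conjCx x = x) : x = iV (reP x) := by
  have h2 : imP x = - imP x := by
    conv_lhs => rw [← h]
    rw [imP_conjCx]
  have him : imP x = 0 := by
    have h3 : (2 : ℝ) • imP x = 0 := by
      rw [two_smul]
      nth_rewrite 1 [h2]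
      simp
    simpa using (smul_eq_zero.mp h3).resolve_left (by norm_num)
  calc x = iV (reP x) + Complex.I • iV (imP x) := cx_decomp x
    _ = iV (reP x) := by rw [him]; simp

end CDirac

namespace CDirac

variable {V : Type*} [AddCommGroup V] [Module ℝ V]

lemma dualExt_tmul (α : V →ₗ[ℝ] ℝ) (z : ℂ) (v : V) :
    dualExt α (z ⊗ₜ[ℝ] v) = z * (α v : ℂ) := by
  simp [dualExt, dualExtFun, dualExtAux]

lemma dualExt_iV (α : V →ₗ[ℝ] ℝ) (v : V) :
    dualExt α (iV v) = (α v : ℂ) := by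
  simp [iV, TensorProduct.mk_apply, dualExt_tmul]

lemma dualExt_conjCx (α : V →ₗ[ℝ] ℝ) (x : Cx V) :
    dualExt α (conjCx x) = starRingEnd ℂ (dualExt α x) := by
  induction x using TensorProduct.induction_on with
  | zero => simp
  | tmul z v =>
      rw [conjCx_tmul, dualExt_tmul, dualExt_tmul]
      simp
  | add x y hx hy => rw [map_add, map_add, map_add, map_add, hx, hy]

lemma conjDual_apply (ξ : DualC V) (x : Cx V) :
    conjDual ξ x = starRingEnd ℂ (ξ (conjCx x)) := rfl

lemma conjDual_dualExt (α : V →ₗ[ℝ] ℝ) : conjDual (dualExt α) = dualExt α := by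
  apply LinearMap.ext; intro x
  rw [conjDual_apply, dualExt_conjCx]
  simp

lemma conjDual_conjDual (ξ : DualC V) : conjDual (conjDual ξ) = ξ := by
  apply LinearMap.ext; intro x
  rw [conjDual_apply, conjDual_apply, conjCx_conjCx]
  simp

lemma conjT_apply (a : TCx V) : conjT a = (conjCx a.1, conjDual a.2) := rfl

lemma conjT_conjT (a : TCx V) : conjT (conjT a) = a := by
  rw [conjT_apply, conjT_apply]
  simp only [conjCx_conjCx, conjDual_conjDual]

lemma conjT_iT (a : TR V) : conjT (iT a) = iT a := by
  rw [conjT_apply]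
  simp only [iT, LinearMap.coe_mk, AddHom.coe_mk, conjCx_iV, conjDual_dualExt]

lemma mem_conjSub_iff_of_real {M : Submodule ℂ (TCx V)} {x : TCx V}
    (hx : conjT x = x) : x ∈ conjSub M ↔ x ∈ M := by
  constructor
  · rintro ⟨m, hm, hme⟩
    have : m = x := by
      have := congrArg conjT hme
      rwa [conjT_conjT, hx] at this
    rwa [← this]
  · intro h
    exact ⟨x, h, hx⟩

lemma mem_Ksub_iff {M : Submodule ℂ (TCx V)} {a : TR V} :
    a ∈ Ksub M ↔ iT a ∈ M := by
  constructor
  · intro h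
    exact ((Submodule.mem_inf.mp h).1)
  · intro h
    refine Submodule.mem_comap.mpr (Submodule.mem_inf.mpr ⟨h, ?_⟩)
    exact (mem_conjSub_iff_of_real (conjT_iT a)).mpr h

lemma bilinExt_iV (B : V →ₗ[ℝ] V →ₗ[ℝ] ℝ) (v : V) :
    bilinExt B (iV v) = dualExt (B v) := by
  simp [bilinExt, bilinExtAux, iV, TensorProduct.mk_apply]

end CDirac

namespace CDirac

variable {V : Type*} [AddCommGroup V] [Module ℝ V]

lemma conjCx_real_smul (r : ℝ) (x : Cx V) : conjCx (r • x) = r • conjCx x := by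
  rw [← algebraMap_smul ℂ r x, conjCx_smul', ← algebraMap_smul ℂ r (conjCx x)]
  congr 1
  simp [Complex.conj_ofReal]

end CDirac


open CDirac Module

open CDirac Module in
set_option maxHeartbeats 4000000 in
/-- For a lagrangian `L = L(E,ε) ⊆ 𝕋_ℂV` there is a real two-form `B`
such that the real part `K'` of `e^B L ∩ conj(e^B L)` splits as
`K' = Δ₀ ⊕ Ann D ⊆ V ⊕ V^* = 𝕋V`. -/
theorem stmt18 (V : Type*) [AddCommGroup V] [Module ℝ V] [FiniteDimensional ℝ V]
    (L : Submodule ℂ (TCx V)) (hL : IsLagrangianC L)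
    (E : Submodule ℂ (Cx V)) (hE : E = Esub L)
    (ε : ↥E →ₗ[ℂ] ↥E →ₗ[ℂ] ℂ) (halt : ∀ x : ↥E, ε x x = 0)
    (hchar : ∀ a : TCx V, a ∈ L ↔ ∃ h : a.1 ∈ E, ∀ y : ↥E, a.2 ↑y = ε ⟨a.1, h⟩ y)
    (D : Submodule ℝ V) (hD : D = ((E ⊔ conjE E).restrictScalars ℝ).comap iV)
    (Δ₀ : Submodule ℝ V)
    (hΔ₀ : (Δ₀ : Set V) =
      {X : V | ∃ (h1 : iV X ∈ E) (_ : iV X ∈ conjE E),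
        ∀ (Y : V) (g1 : iV Y ∈ E) (_ : iV Y ∈ conjE E),
          (ε ⟨iV X, h1⟩ ⟨iV Y, g1⟩).im = 0}) :
    ∃ B : V →ₗ[ℝ] V →ₗ[ℝ] ℝ, (∀ v : V, B v v = 0) ∧
      Ksub (L.map (eB B)) = Δ₀.prod D.dualAnnihilator := by
  classical
  -- basic membership reformulations
  have hZmem : ∀ X : V, X ∈ Δ₀ ↔ ∃ (h1 : iV X ∈ E) (_ : iV X ∈ conjE E),
      ∀ (Y : V) (g1 : iV Y ∈ E) (_ : iV Y ∈ conjE E),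
        (ε ⟨iV X, h1⟩ ⟨iV Y, g1⟩).im = 0 := by
    intro X
    constructor
    · intro hX
      have h : X ∈ (Δ₀ : Set V) := hX
      rwa [hΔ₀] at h
    · intro hX
      have h : X ∈ (Δ₀ : Set V) := by rw [hΔ₀]; exact hX
      exact h
  have hDmem : ∀ X : V, X ∈ D ↔ iV X ∈ E ⊔ conjE E := by
    intro X; rw [hD]
    simp only [Submodule.mem_comap, Submodule.restrictScalars_mem]
  -- the extension of ε to all of Cx V via a projection
  obtain ⟨QE, hQE⟩ := Submodule.exists_isCompl E
  set projE : Cx V →ₗ[ℂ] ↥E := E.projectionOnto QE hQE with hprojE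
  set εx : Cx V →ₗ[ℂ] Cx V →ₗ[ℂ] ℂ := (ε.comp projE).compl₂ projE with hεxdef
  have hεx : ∀ x y : ↥E, εx (x : Cx V) (y : Cx V) = ε x y := by
    intro x y
    simp only [hεxdef, LinearMap.compl₂_apply, LinearMap.comp_apply, hprojE,
      Submodule.projectionOnto_apply_left hQE]
  have hεalt : ∀ x (hx : x ∈ E), εx x x = 0 := by
    intro x hx
    rw [hεx ⟨x, hx⟩ ⟨x, hx⟩, halt]
  have hεanti : ∀ x (hx : x ∈ E) y (hy : y ∈ E), εx x y = - εx y x := by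
    intro x hx y hy
    have h := halt (⟨x, hx⟩ + ⟨y, hy⟩)
    simp only [map_add, LinearMap.add_apply, halt] at h
    have h1 : εx x y = ε ⟨x, hx⟩ ⟨y, hy⟩ := hεx ⟨x, hx⟩ ⟨y, hy⟩
    have h2 : εx y x = ε ⟨y, hy⟩ ⟨x, hx⟩ := hεx ⟨y, hy⟩ ⟨x, hx⟩
    rw [h1, h2]
    linear_combination h
  -- conjugation-stability of E ⊔ Ē
  have hconjEE : ∀ x ∈ E ⊔ conjE E, conjCx x ∈ E ⊔ conjE E := by
    intro x hx
    rcases Submodule.mem_sup.mp hx with ⟨a, ha, b, hb, rfl⟩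
    rcases hb with ⟨c, hc, rfl⟩
    rw [map_add, conjCx_conjCx]
    exact add_mem (Submodule.mem_sup_right ⟨a, ha, rfl⟩) (Submodule.mem_sup_left hc)
  -- real and imaginary parts of elements of E ⊔ Ē lie in D
  have hsum2 : ∀ x : Cx V, x + conjCx x = iV (reP x) + iV (reP x) := by
    intro x
    nth_rewrite 1 [cx_decomp x]
    rw [conjCx_decomp x]
    abel
  have hdiff2 : ∀ x : Cx V,
      x - conjCx x = Complex.I • iV (imP x) + Complex.I • iV (imP x) := by
    intro x
    nth_rewrite 1 [cx_decomp x]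
    rw [conjCx_decomp x]
    abel
  have hrePD : ∀ x ∈ E ⊔ conjE E, reP x ∈ D := by
    intro x hx
    rw [hDmem]
    have h1 : iV (reP x) = (2⁻¹ : ℂ) • (x + conjCx x) := by
      rw [hsum2 x]
      rw [show iV (reP x) + iV (reP x) = (2 : ℂ) • iV (reP x) by rw [two_smul]]
      rw [smul_smul]
      norm_num
    rw [h1]
    exact Submodule.smul_mem _ _ (add_mem hx (hconjEE x hx))
  have himPD : ∀ x ∈ E ⊔ conjE E, imP x ∈ D := by
    intro x hx
    rw [hDmem]
    have h1 : iV (imP x) = ((2 : ℂ) * Complex.I)⁻¹ • (x - conjCx x) := by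
      rw [hdiff2 x]
      rw [show Complex.I • iV (imP x) + Complex.I • iV (imP x)
          = ((2 : ℂ) * Complex.I) • iV (imP x) by
        rw [two_mul, add_smul]]
      rw [smul_smul]
      rw [inv_mul_cancel₀ (by simp [Complex.I_ne_zero] : (2 : ℂ) * Complex.I ≠ 0)]
      rw [one_smul]
    rw [h1]
    exact Submodule.smul_mem _ _ (sub_mem hx (hconjEE x hx))
  -- a linear section of the real part map, with values in E
  set ER := E.restrictScalars ℝ with hER
  have hmemER : ∀ y : ↥ER, (y : Cx V) ∈ E := fun y => y.2
  set F : ↥ER →ₗ[ℝ] ↥D :=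
    LinearMap.codRestrict D (reP.comp ER.subtype)
      (fun y => hrePD _ (Submodule.mem_sup_left (hmemER y))) with hF
  have hFsurj : Function.Surjective F := by
    intro d
    have hd : iV (d : V) ∈ E ⊔ conjE E := (hDmem _).mp d.2
    rcases Submodule.mem_sup.mp hd with ⟨a, ha, b, hb, hab⟩
    rcases hb with ⟨c, hc, rfl⟩
    refine ⟨⟨a + c, add_mem ha hc⟩, ?_⟩
    apply Subtype.ext
    have h1 : reP (a + conjCx c) = (d : V) := by rw [hab, reP_iV]
    show reP (a + c) = (d : V)
    rw [map_add] at h1 ⊢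
    rw [reP_conjCx c] at h1
    exact h1
  obtain ⟨g, hg⟩ := F.exists_rightInverse_of_surjective (LinearMap.range_eq_top.mpr hFsurj)
  have hgre : ∀ d : ↥D, reP ((g d : Cx V)) = (d : V) := by
    intro d
    exact congrArg Subtype.val (LinearMap.congr_fun hg d)
  -- projections onto D and Δ₀
  obtain ⟨QD, hQD⟩ := Submodule.exists_isCompl D
  set pD : V →ₗ[ℝ] ↥D := D.projectionOnto QD hQD with hpDdef
  have hpD : ∀ X (hX : X ∈ D), pD X = ⟨X, hX⟩ := fun X hX =>
    Submodule.projectionOnto_apply_left hQD ⟨X, hX⟩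
  obtain ⟨QZ, hQZ⟩ := Submodule.exists_isCompl Δ₀
  set pZ : V →ₗ[ℝ] ↥Δ₀ := Δ₀.projectionOnto QZ hQZ with hpZdef
  have hpZ : ∀ X (hX : X ∈ Δ₀), pZ X = ⟨X, hX⟩ := fun X hX =>
    Submodule.projectionOnto_apply_left hQZ ⟨X, hX⟩
  -- the section e
  set e : V →ₗ[ℝ] Cx V :=
    ((LinearMap.lsmul ℂ (Cx V) ((2 : ℂ)⁻¹)).restrictScalars ℝ).comp
      (ER.subtype.comp (g.comp pD)) with hedef
  have heval : ∀ v : V, e v = (2 : ℂ)⁻¹ • ((g (pD v) : Cx V)) := fun v => rfl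
  have heE : ∀ v : V, e v ∈ E := fun v => by
    rw [heval]; exact Submodule.smul_mem _ _ (hmemER _)
  have heconj : ∀ v ∈ D, e v + conjCx (e v) = iV v := by
    intro v hv
    rw [heval, conjCx_smul']
    rw [show (starRingEnd ℂ) ((2:ℂ)⁻¹) = (2:ℂ)⁻¹ by rw [map_inv₀, map_ofNat]]
    rw [← smul_add, hsum2, hgre, hpD v hv]
    rw [show iV v + iV v = (2 : ℂ) • iV v by rw [two_smul]]
    rw [smul_smul]
    norm_num
  -- membership facts for Δ₀
  have hZE : ∀ X ∈ Δ₀, iV X ∈ E := by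
    intro X hX
    obtain ⟨h1, -, -⟩ := (hZmem X).mp hX
    exact h1
  have hZD : ∀ X ∈ Δ₀, X ∈ D := by
    intro X hX
    rw [hDmem]
    exact Submodule.mem_sup_left (hZE X hX)
  -- Key Lemma A : for X ∈ Δ₀ and anti-real z ∈ E, Re εx(iV X, z) = 0
  have hA : ∀ X ∈ Δ₀, ∀ z ∈ E, conjCx z = -z → (εx (iV X) z).re = 0 := by
    intro X hX z hz hzanti
    have hzI : z = Complex.I • iV (imP z) := eq_I_smul_of_anti hzanti
    set w := imP z with hw
    have hwE : iV w ∈ E := by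
      have h1 : iV w = (-Complex.I) • z := by
        rw [hzI, smul_smul]
        norm_num
      rw [h1]
      exact Submodule.smul_mem _ _ hz
    have hwE' : iV w ∈ conjE E := ⟨iV w, hwE, conjCx_iV w⟩
    obtain ⟨h1, h2, h3⟩ := (hZmem X).mp hX
    have him := h3 w hwE hwE'
    have hc : εx (iV X) (iV w) = ε ⟨iV X, h1⟩ ⟨iV w, hwE⟩ := hεx ⟨iV X, h1⟩ ⟨iV w, hwE⟩
    rw [hzI, map_smul, smul_eq_mul, Complex.mul_re, hc]
    simp [him]
  -- Reduction lemma
  have hred : ∀ X ∈ Δ₀, ∀ Y ∈ D, ∀ z ∈ E, z + conjCx z = iV Y →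
      (εx (iV X) (e Y)).re = (εx (iV X) z).re := by
    intro X hX Y hY z hz hzY
    have hce : conjCx (e Y) = iV Y - e Y := by
      rw [eq_sub_iff_add_eq, add_comm]
      exact heconj Y hY
    have hcz : conjCx z = iV Y - z := by
      rw [eq_sub_iff_add_eq, add_comm]
      exact hzY
    have hdanti : conjCx (e Y - z) = -(e Y - z) := by
      rw [map_sub, hce, hcz]
      abel
    have hdE : e Y - z ∈ E := sub_mem (heE Y) hz
    have h0 := hA X hX _ hdE hdanti
    have hsplit : εx (iV X) (e Y) = εx (iV X) z + εx (iV X) (e Y - z) := by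
      rw [map_sub]
      ring
    rw [hsplit, Complex.add_re, h0, add_zero]
  -- halving: for Z ∈ Δ₀, Re εx(iV X, e Z) = Re εx(iV X, iV Z)/2
  have hhalf : ∀ X ∈ Δ₀, ∀ Z ∈ Δ₀,
      (εx (iV X) (e Z)).re = (εx (iV X) (iV Z)).re / 2 := by
    intro X hX Z hZ
    have hZE' := hZE Z hZ
    have hzdec : (2 : ℂ)⁻¹ • iV Z + conjCx ((2 : ℂ)⁻¹ • iV Z) = iV Z := by
      rw [conjCx_smul']
      rw [show (starRingEnd ℂ) ((2:ℂ)⁻¹) = (2:ℂ)⁻¹ by rw [map_inv₀, map_ofNat]]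
      rw [conjCx_iV, ← add_smul]
      norm_num
    have h := hred X hX Z (hZD Z hZ) _ (Submodule.smul_mem _ _ hZE') hzdec
    rw [h, map_smul, smul_eq_mul, Complex.mul_re]
    norm_num
    ring
  -- scalar helpers
  have hscale : ∀ w : ℂ, ((2:ℂ)⁻¹ * w).re = w.re / 2 := by
    intro w
    rw [show (2:ℂ)⁻¹ = ((2⁻¹ : ℝ) : ℂ) by norm_num, Complex.re_ofReal_mul]
    ring
  have hscaleI : ∀ w : ℂ, ((-Complex.I) * w).re = w.im := by
    intro w
    simp [Complex.mul_re]
  -- the two-form B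
  have hT : ∀ f g' : V →ₗ[ℝ] Cx V, ∃ T : V →ₗ[ℝ] V →ₗ[ℝ] ℝ,
      ∀ u v, T u v = (εx (f u) (g' v)).re := by
    intro f g'
    refine ⟨LinearMap.mk₂ ℝ (fun u v => (εx (f u) (g' v)).re) ?_ ?_ ?_ ?_,
      fun u v => rfl⟩
    · intro u u' v
      simp [map_add, LinearMap.add_apply]
    · intro r u v
      rw [map_smul, LinearMap.map_smul_of_tower, LinearMap.smul_apply,
        Complex.smul_re]
    · intro u v v'
      simp [map_add]
    · intro r u v
      rw [map_smul, LinearMap.map_smul_of_tower, Complex.smul_re]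
  set m1 : V →ₗ[ℝ] Cx V := iV.comp (Δ₀.subtype.comp pZ) with hm1def
  have hm1 : ∀ X ∈ Δ₀, m1 X = iV X := by
    intro X hX
    show iV ((pZ X : V)) = iV X
    rw [hpZ X hX]
  obtain ⟨T1, hT1⟩ := hT m1 e
  obtain ⟨T3, hT3⟩ := hT m1 (e.comp (Δ₀.subtype.comp pZ))
  set B : V →ₗ[ℝ] V →ₗ[ℝ] ℝ := (-2 : ℝ) • T1 + (2 : ℝ) • T1.flip + (2 : ℝ) • T3
    with hBdef
  have hBuv : ∀ u v, B u v = -2 * (εx (m1 u) (e v)).re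
      + 2 * (εx (m1 v) (e u)).re + 2 * (εx (m1 u) (e ((pZ v : V)))).re := by
    intro u v
    simp only [hBdef, LinearMap.add_apply, LinearMap.smul_apply, smul_eq_mul,
      LinearMap.flip_apply, hT1, hT3, LinearMap.comp_apply, Submodule.coe_subtype]
    try ring
  -- B is alternating
  have hBvv : ∀ v : V, B v v = 0 := by
    intro v
    rw [hBuv]
    have hZ : (pZ v : V) ∈ Δ₀ := (pZ v).2
    rw [show m1 v = iV ((pZ v : V)) from rfl]
    rw [hhalf _ hZ _ hZ, hεalt _ (hZE _ hZ)]
    simp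
  -- the key property (P2)
  have hP2 : ∀ X ∈ Δ₀, ∀ Y ∈ D, B X Y = -2 * (εx (iV X) (e Y)).re := by
    intro X hX Y hY
    rw [hBuv, hm1 X hX]
    have hZ : (pZ Y : V) ∈ Δ₀ := (pZ Y).2
    rw [show m1 Y = iV ((pZ Y : V)) from rfl]
    rw [hhalf _ hZ _ hX, hhalf _ hX _ hZ]
    rw [hεanti _ (hZE _ hZ) _ (hZE _ hX)]
    simp only [Complex.neg_re]
    ring
  refine ⟨B, hBvv, ?_⟩
  -- the main computation
  apply Submodule.ext
  rintro ⟨X, α⟩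
  rw [mem_Ksub_iff]
  rw [show iT ((X, α) : TR V) = ((iV X, dualExt α) : TCx V) from rfl]
  have hmap : ((iV X, dualExt α) : TCx V) ∈ L.map (eB B) ↔
      (((iV X, dualExt (α - B X)) : TCx V) ∈ L) := by
    constructor
    · rintro ⟨⟨x, ξ⟩, hb, hbe⟩
      have h1 : x = iV X := congrArg Prod.fst hbe
      have h2 : ξ + bilinExt B x = dualExt α := congrArg Prod.snd hbe
      have h3 : ξ = dualExt (α - B X) := by
        rw [map_sub, eq_sub_iff_add_eq]
        rw [h1, bilinExt_iV] at h2
        exact h2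
      rwa [← h1, ← h3]
    · intro h
      refine ⟨(iV X, dualExt (α - B X)), h, ?_⟩
      show ((iV X, dualExt (α - B X) + bilinExt B (iV X)) : TCx V) = _
      rw [bilinExt_iV, map_sub]
      refine Prod.ext rfl ?_
      show dualExt α - dualExt (B X) + dualExt (B X) = dualExt α
      abel
  rw [hmap, hchar]
  simp only [Submodule.mem_prod, Submodule.mem_dualAnnihilator]
  show (∃ h : iV X ∈ E, ∀ y : ↥E, dualExt (α - B X) ↑y
      = ε ⟨iV X, h⟩ y) ↔ (X ∈ Δ₀ ∧ ∀ w ∈ D, α w = 0)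
  constructor
  · rintro ⟨h, hy⟩
    have hXconj : iV X ∈ conjE E := ⟨iV X, h, conjCx_iV X⟩
    have hXZ : X ∈ Δ₀ := by
      rw [hZmem]
      refine ⟨h, hXconj, ?_⟩
      intro Y g1 _
      have h1 : dualExt (α - B X) (iV Y) = ε ⟨iV X, h⟩ ⟨iV Y, g1⟩ := hy ⟨iV Y, g1⟩
      rw [dualExt_iV] at h1
      rw [← h1]
      simp
    refine ⟨hXZ, ?_⟩
    intro Y hY
    have h1 : dualExt (α - B X) (e Y) = εx (iV X) (e Y) := by
      exact (hy ⟨e Y, heE Y⟩).trans (hεx ⟨iV X, h⟩ ⟨e Y, heE Y⟩).symm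
    have h2 : dualExt (α - B X) (conjCx (e Y))
        = starRingEnd ℂ (εx (iV X) (e Y)) := by
      rw [dualExt_conjCx, h1]
    have h3 : dualExt (α - B X) (iV Y)
        = εx (iV X) (e Y) + starRingEnd ℂ (εx (iV X) (e Y)) := by
      rw [← heconj Y hY, map_add, h1, h2]
    rw [dualExt_iV, Complex.add_conj] at h3
    have h4 : (α - B X) Y = 2 * (εx (iV X) (e Y)).re := by exact_mod_cast h3
    have h5 := hP2 X hXZ Y hY
    have h6 : (α - B X) Y = α Y - B X Y := rfl
    rw [h6, h5] at h4
    linarith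
  · rintro ⟨hXZ, hαD⟩
    obtain ⟨h, hXconj, hIm⟩ := (hZmem X).mp hXZ
    refine ⟨h, ?_⟩
    intro y
    have hy2 : (y : Cx V) ∈ E ⊔ conjE E := Submodule.mem_sup_left y.2
    set Yr := reP ((y : Cx V)) with hYrdef
    set Yi := imP ((y : Cx V)) with hYidef
    have hYrD : Yr ∈ D := hrePD _ hy2
    have hYiD : Yi ∈ D := himPD _ hy2
    -- real-part section value
    have hzr : (2:ℂ)⁻¹ • (y : Cx V) + conjCx ((2:ℂ)⁻¹ • (y : Cx V)) = iV Yr := by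
      rw [conjCx_smul', show (starRingEnd ℂ) ((2:ℂ)⁻¹) = (2:ℂ)⁻¹ by rw [map_inv₀, map_ofNat],
        ← smul_add, hsum2]
      rw [show iV Yr + iV Yr = (2:ℂ) • iV Yr by rw [two_smul], smul_smul]
      norm_num
    have hRr := hred X hXZ Yr hYrD _ (Submodule.smul_mem _ _ y.2) hzr
    have hRr' : (εx (iV X) (e Yr)).re = (εx (iV X) ((y : Cx V))).re / 2 := by
      rw [hRr, map_smul, smul_eq_mul, hscale]
    -- imaginary-part section value
    have hziE : (2:ℂ)⁻¹ • ((-Complex.I) • (y : Cx V)) ∈ E :=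
      Submodule.smul_mem _ _ (Submodule.smul_mem _ _ y.2)
    have hzi : (2:ℂ)⁻¹ • ((-Complex.I) • (y : Cx V))
        + conjCx ((2:ℂ)⁻¹ • ((-Complex.I) • (y : Cx V))) = iV Yi := by
      rw [conjCx_smul', show (starRingEnd ℂ) ((2:ℂ)⁻¹) = (2:ℂ)⁻¹ by rw [map_inv₀, map_ofNat],
        conjCx_smul', show (starRingEnd ℂ) (-Complex.I) = Complex.I by simp,
        ← smul_add]
      rw [show (-Complex.I) • (y : Cx V) + Complex.I • conjCx ((y : Cx V))
          = (-Complex.I) • ((y : Cx V) - conjCx ((y : Cx V))) by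
        rw [smul_sub, neg_smul, neg_smul, sub_neg_eq_add]]
      rw [hdiff2, smul_add, smul_smul]
      rw [show (-Complex.I) * Complex.I = 1 by
        rw [neg_mul, Complex.I_mul_I, neg_neg]]
      rw [one_smul]
      rw [show iV Yi + iV Yi = (2:ℂ) • iV Yi by rw [two_smul], smul_smul]
      norm_num
    have hRi := hred X hXZ Yi hYiD _ hziE hzi
    have hRi' : (εx (iV X) (e Yi)).re = (εx (iV X) ((y : Cx V))).im / 2 := by
      rw [hRi, map_smul, smul_eq_mul, hscale, map_smul, smul_eq_mul, hscaleI]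
    -- put everything together
    have hBr := hP2 X hXZ Yr hYrD
    have hBi := hP2 X hXZ Yi hYiD
    rw [hRr'] at hBr
    rw [hRi'] at hBi
    have hγr : (α - B X) Yr = (εx (iV X) ((y : Cx V))).re := by
      show α Yr - B X Yr = _
      rw [hαD Yr hYrD, hBr]
      ring
    have hγi : (α - B X) Yi = (εx (iV X) ((y : Cx V))).im := by
      show α Yi - B X Yi = _
      rw [hαD Yi hYiD, hBi]
      ring
    have hdec : (y : Cx V) = iV Yr + Complex.I • iV Yi := cx_decomp _
    rw [show ε ⟨iV X, h⟩ y = εx (iV X) ((y : Cx V)) from (hεx ⟨iV X, h⟩ y).symm]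
    calc dualExt (α - B X) ((y : Cx V))
        = dualExt (α - B X) (iV Yr)
          + Complex.I * dualExt (α - B X) (iV Yi) := by
          conv_lhs => rw [hdec]
          rw [map_add, map_smul, smul_eq_mul]
      _ = (((εx (iV X) ((y : Cx V))).re : ℝ) : ℂ)
          + Complex.I * (((εx (iV X) ((y : Cx V))).im : ℝ) : ℂ) := by
          rw [dualExt_iV, dualExt_iV, hγr, hγi]
      _ = εx (iV X) ((y : Cx V)) := by
          rw [mul_comm, Complex.re_add_im]
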